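/- arXiv:2104.02596 — 4 statements merged into one kernel-verified Lean document; each statement's English description precedes it below -/
import Mathlib

section
/- Let (θ_k) be a sequence of positive reals with θ_0 = 1, θ_k ≤ 1, satisfying (1 - θ_k)/θ_k² = 1/θ_{k-1}² for k ≥ 1. Then the sequence is non-increasing (θ_k ≤ θ_{k-1}), and moreover θ_{k-1}/θ_k = 1/√(1 - θ_k) ≤ 1.62 for all k ≥ 1. -/
/-- Nesterov step-size sequence is non-increasing and θₖ₋₁/θₖ = 1/√(1-θₖ) ≤ 1.62. -/
theorem stmt_1 (θ : ℕ → ℝ)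
    (hθ0 : θ 0 = 1)
    (hpos : ∀ k, 0 < θ k) (hle1 : ∀ k, θ k ≤ 1)
    (hrec : ∀ k, 1 ≤ k → (1 - θ k) / (θ k) ^ 2 = 1 / (θ (k - 1)) ^ 2) :
    (∀ k, 1 ≤ k → θ k ≤ θ (k - 1)) ∧
    (∀ k, 1 ≤ k → θ (k - 1) / θ k = 1 / Real.sqrt (1 - θ k) ∧
      1 / Real.sqrt (1 - θ k) ≤ 1.62) := by
  have key : ∀ k, 1 ≤ k → θ k < 1 ∧ (θ (k-1))^2 * (1 - θ k) = (θ k)^2 := by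
    intro k hk
    have h := hrec k hk
    have ha := hpos (k-1)
    have hb := hpos k
    have heq : (θ (k-1))^2 * (1 - θ k) = (θ k)^2 := by
      field_simp at h
      nlinarith [h]
    have hlt : θ k < 1 := by nlinarith [mul_pos ha ha]
    exact ⟨hlt, heq⟩
  constructor
  · intro k hk
    obtain ⟨hlt, heq⟩ := key k hk
    have ha := hpos (k-1)
    have hb := hpos k
    have hsq : (θ k)^2 ≤ (θ (k-1))^2 := by nlinarith [mul_pos ha ha]
    exact le_of_pow_le_pow_left₀ two_ne_zero ha.le hsq
  · intro k hk
    obtain ⟨hlt, heq⟩ := key k hk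
    have ha := hpos (k-1)
    have hb := hpos k
    have hsqrt : Real.sqrt (1 - θ k) = θ k / θ (k-1) := by
      rw [show 1 - θ k = (θ k / θ (k-1))^2 by field_simp; nlinarith [heq]]
      exact Real.sqrt_sq (by positivity)
    have ha1 := hle1 (k-1)
    have hkey : (θ k)^2 + θ k ≤ 1 := by nlinarith
    constructor
    · rw [hsqrt]; field_simp
    · rw [hsqrt]
      have hble : θ k ≤ 4061/6561 := by nlinarith
      have h2 : ((50:ℝ)/81 * θ (k-1))^2 ≤ (θ k)^2 := by
        nlinarith [mul_nonneg (sq_nonneg (θ (k-1)))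
          (show (0:ℝ) ≤ 4061/6561 - θ k by linarith)]
      have h1 : (50:ℝ)/81 ≤ θ k / θ (k-1) := by
        rw [le_div_iff₀ ha]
        exact le_of_pow_le_pow_left₀ two_ne_zero hb.le h2
      calc 1 / (θ k / θ (k-1)) ≤ 1 / ((50:ℝ)/81) := by
            apply one_div_le_one_div_of_le (by norm_num) h1
        _ = 1.62 := by norm_num
end

section
/- Let (θ_k) satisfy θ_0 = 1, 0 < θ_k ≤ 1, and (1 - θ_k)/θ_k² = 1/θ_{k-1}², and let ρ ∈ (0,1). Then for any integers 0 ≤ r < K, the weighted sum S = Σ_{k=r+1}^{K} ρ^k/θ_k² satisfies S ≤ 3 ρ^{r+1} / ((1-ρ)³ θ_r²). -/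
open scoped BigOperators

private lemma choose2_cast (n : ℕ) : ((n + 2).choose 2 : ℝ) = (n + 1) * (n + 2) / 2 := by
  have h : (n + 2).choose 2 = (n + 2) * (n + 1) / 2 := by
    rw [Nat.choose_two_right]
    simp
  rw [h, Nat.cast_div (by simpa [mul_comm] using (Nat.even_mul_succ_self (n+1)).two_dvd)
    (by norm_num)]
  push_cast
  ring

/-- Weighted sum bound: Σ_{k=r+1}^K ρ^k/θₖ² ≤ 3ρ^{r+1}/((1-ρ)³θᵣ²). -/
theorem stmt_2 (θ : ℕ → ℝ)
    (hθ0 : θ 0 = 1)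
    (hpos : ∀ k, 0 < θ k) (hle1 : ∀ k, θ k ≤ 1)
    (hrec : ∀ k, 1 ≤ k → (1 - θ k) / (θ k) ^ 2 = 1 / (θ (k - 1)) ^ 2)
    (ρ : ℝ) (hρ0 : 0 < ρ) (hρ1 : ρ < 1)
    (r K : ℕ) (hrK : r < K) :
    ∑ k ∈ Finset.Icc (r + 1) K, ρ ^ k / (θ k) ^ 2 ≤
      3 * ρ ^ (r + 1) / ((1 - ρ) ^ 3 * (θ r) ^ 2) := by
  have hu : (0:ℝ) < 1 - ρ := by linarith
  have hθr := hpos r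
  obtain ⟨A, hA⟩ : ∃ x : ℝ, x = 1 / (θ r) ^ 2 := ⟨_, rfl⟩
  obtain ⟨B, hB⟩ : ∃ x : ℝ, x = 1 / θ r := ⟨_, rfl⟩
  -- basic recursion consequences
  have ha : ∀ k, 1 ≤ k → 1 / (θ k) ^ 2 = 1 / (θ (k - 1)) ^ 2 + 1 / θ k := by
    intro k hk
    have h1 := (hpos k).ne'
    have h2 : (1 - θ k) / (θ k) ^ 2 = 1 / (θ k) ^ 2 - 1 / θ k := by
      field_simp
    have := hrec k hk
    rw [h2] at this
    linarith
  have hb : ∀ k, 1 ≤ k → 1 / θ k ≤ 1 / θ (k - 1) + 1 := by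
    intro k hk
    have h1 := hpos k
    have h2 := hpos (k - 1)
    have h3 := hle1 (k - 1)
    have e := ha k hk
    have e2 : (1 / θ k) ^ 2 = (1 / θ (k - 1)) ^ 2 + 1 / θ k := by
      rw [one_div_pow, one_div_pow]
      exact e
    have hy1 : 1 ≤ 1 / θ (k - 1) := by rw [le_div_iff₀ h2]; linarith
    have hx0 : 0 < 1 / θ k := by positivity
    have hy0 : 0 < 1 / θ (k - 1) := by positivity
    by_contra hcon
    push_neg at hcon
    have p1 : 0 < 1 / θ k - 1 / θ (k - 1) - 1 := by linarith
    nlinarith [mul_pos p1 hx0, mul_pos hy0 p1]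
  -- 1/θ(r+n) ≤ B + n
  have hbn : ∀ n : ℕ, 1 / θ (r + n) ≤ B + n := by
    intro n
    induction n with
    | zero => simp [hB]
    | succ n ih =>
      have h := hb (r + n + 1) (by omega)
      have hs : r + n + 1 - 1 = r + n := by omega
      rw [hs] at h
      have e : r + (n + 1) = r + n + 1 := by omega
      rw [e]
      push_cast
      linarith
  -- 1/θ(r+n)² ≤ A + n·B + n(n+1)/2
  have han : ∀ n : ℕ, 1 / (θ (r + n)) ^ 2 ≤ A + n * B + n * (n + 1) / 2 := by
    intro n
    induction n with
    | zero => simp [hA]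
    | succ n ih =>
      have h := ha (r + n + 1) (by omega)
      have hs : r + n + 1 - 1 = r + n := by omega
      rw [hs] at h
      have hbb := hbn (n + 1)
      have e : r + (n + 1) = r + n + 1 := by omega
      rw [e] at hbb ⊢
      rw [h]
      push_cast at hbb ⊢
      nlinarith [hbn n]
  -- HasSum facts
  have hnorm : ‖ρ‖ < 1 := by rw [Real.norm_eq_abs, abs_of_pos hρ0]; exact hρ1
  have h1 : HasSum (fun n : ℕ => ρ ^ n) ((1 - ρ)⁻¹) :=
    hasSum_geometric_of_lt_one hρ0.le hρ1
  have h2 : HasSum (fun n : ℕ => ((n : ℝ) + 1) * ρ ^ n) (1 / (1 - ρ) ^ 2) := by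
    have := hasSum_choose_mul_geometric_of_norm_lt_one (𝕜 := ℝ) 1 hnorm
    simpa [Nat.choose_one_right] using this
  have h3 : HasSum (fun n : ℕ => ((n : ℝ) + 1) * ((n : ℝ) + 2) / 2 * ρ ^ n)
      (1 / (1 - ρ) ^ 3) := by
    have := hasSum_choose_mul_geometric_of_norm_lt_one (𝕜 := ℝ) 2 hnorm
    have e : ∀ n : ℕ, ((n + 2).choose 2 : ℝ) * ρ ^ n
        = ((n : ℝ) + 1) * ((n : ℝ) + 2) / 2 * ρ ^ n := by
      intro n; rw [choose2_cast]
    simpa [e] using this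
  have hsum : HasSum
      (fun n : ℕ => ρ ^ (r + 1) * (A * ρ ^ n + B * (((n : ℝ) + 1) * ρ ^ n) +
        ((n : ℝ) + 1) * ((n : ℝ) + 2) / 2 * ρ ^ n))
      (ρ ^ (r + 1) * (A * (1 - ρ)⁻¹ + B * (1 / (1 - ρ) ^ 2) + 1 / (1 - ρ) ^ 3)) :=
    (((h1.mul_left A).add (h2.mul_left B)).add h3).mul_left _
  have hA1 : 1 ≤ A := by rw [hA, le_div_iff₀ (by positivity)]; nlinarith [hle1 r]
  have hBA : B ≤ A := by
    rw [hA, hB, div_le_div_iff₀ hθr (by positivity)]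
    nlinarith [hle1 r]
  have hB1 : 1 ≤ B := by rw [hB, le_div_iff₀ hθr]; linarith [hle1 r]
  calc ∑ k ∈ Finset.Icc (r + 1) K, ρ ^ k / (θ k) ^ 2
      = ∑ i ∈ Finset.range (K + 1 - (r + 1)), ρ ^ (r + 1 + i) / (θ (r + 1 + i)) ^ 2 := by
        rw [← Finset.Ico_add_one_right_eq_Icc, Finset.sum_Ico_eq_sum_range]
    _ ≤ ∑ i ∈ Finset.range (K + 1 - (r + 1)),
        ρ ^ (r + 1) * (A * ρ ^ i + B * (((i : ℝ) + 1) * ρ ^ i) +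
          ((i : ℝ) + 1) * ((i : ℝ) + 2) / 2 * ρ ^ i) := by
        apply Finset.sum_le_sum
        intro i _
        have key := han (i + 1)
        have e : r + (i + 1) = r + 1 + i := by omega
        rw [e] at key
        push_cast at key
        have hρi : (0:ℝ) < ρ ^ i := by positivity
        have hρr : (0:ℝ) < ρ ^ (r + 1) := by positivity
        have e2 : ρ ^ (r + 1 + i) / (θ (r + 1 + i)) ^ 2
            = ρ ^ (r + 1) * ρ ^ i * (1 / (θ (r + 1 + i)) ^ 2) := by
          rw [pow_add]; ring
        rw [e2]
        have hkey' : 1 / (θ (r + 1 + i)) ^ 2 ≤ A + B * ((i : ℝ) + 1) +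
            ((i : ℝ) + 1) * ((i : ℝ) + 2) / 2 := by nlinarith
        nlinarith [mul_le_mul_of_nonneg_left hkey' (le_of_lt (mul_pos hρr hρi))]
    _ ≤ ρ ^ (r + 1) * (A * (1 - ρ)⁻¹ + B * (1 / (1 - ρ) ^ 2) + 1 / (1 - ρ) ^ 3) := by
        apply sum_le_hasSum _ _ hsum
        intro i _
        have hA0 : (0:ℝ) ≤ A := by linarith
        have hB0 : (0:ℝ) ≤ B := by linarith
        have hρi : (0:ℝ) ≤ ρ ^ i := by positivity
        have h0 : (0:ℝ) ≤ ρ ^ (r + 1) := by positivity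
        apply mul_nonneg h0
        apply add_nonneg (add_nonneg (mul_nonneg hA0 hρi) (mul_nonneg hB0 (by positivity)))
        positivity
    _ ≤ 3 * ρ ^ (r + 1) / ((1 - ρ) ^ 3 * (θ r) ^ 2) := by
        have hkey : A * (1 - ρ)⁻¹ + B * (1 / (1 - ρ) ^ 2) + 1 / (1 - ρ) ^ 3
            ≤ 3 * A / (1 - ρ) ^ 3 := by
          have e1 : A * (1 - ρ)⁻¹ + B * (1 / (1 - ρ) ^ 2) + 1 / (1 - ρ) ^ 3
              = (A * (1 - ρ) ^ 2 + B * (1 - ρ) + 1) / (1 - ρ) ^ 3 := by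
            field_simp
          rw [e1, div_le_div_iff₀ (by positivity) (by positivity)]
          have hA0 : (0:ℝ) ≤ A := by linarith
          have hB0 : (0:ℝ) ≤ B := by linarith
          have t1 : A * (1 - ρ) ^ 2 ≤ A * 1 := by
            apply mul_le_mul_of_nonneg_left _ hA0
            nlinarith
          have t2 : B * (1 - ρ) ≤ B * 1 := by
            apply mul_le_mul_of_nonneg_left _ hB0
            linarith
          have t3 : A * (1 - ρ) ^ 2 + B * (1 - ρ) + 1 ≤ 3 * A := by linarith
          exact mul_le_mul_of_nonneg_right t3 (by positivity)
        have h0 : (0:ℝ) < ρ ^ (r + 1) := by positivity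
        calc ρ ^ (r + 1) * (A * (1 - ρ)⁻¹ + B * (1 / (1 - ρ) ^ 2) + 1 / (1 - ρ) ^ 3)
            ≤ ρ ^ (r + 1) * (3 * A / (1 - ρ) ^ 3) := mul_le_mul_of_nonneg_left hkey h0.le
          _ = 3 * ρ ^ (r + 1) / ((1 - ρ) ^ 3 * (θ r) ^ 2) := by
              rw [hA]
              field_simp
end

section
/- Let f₁,...,f_m : ℝⁿ → ℝ each be L-smooth and convex, and let F = (1/m)Σᵢ fᵢ. With ȳ, s̄, f(ȳ, y) as in the inexact-gradient setup, for every w ∈ ℝⁿ: F(w) ≤ f(ȳ, y) + ⟨s̄, w − ȳ⟩ + (L/2)‖w − ȳ‖² + (L/(2m)) Σᵢ ‖yᵢ − ȳ‖². -/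
open scoped RealInnerProductSpace BigOperators

/-- Inexact smoothness upper bound (Lemma 1, inequality (13)). -/
theorem stmt_9 (n m : ℕ) (hm : 0 < m) (L : ℝ) (hL : 0 < L)
    (f : Fin m → EuclideanSpace ℝ (Fin n) → ℝ)
    (g : Fin m → EuclideanSpace ℝ (Fin n) → EuclideanSpace ℝ (Fin n))
    (hconv : ∀ i (u v : EuclideanSpace ℝ (Fin n)),
      f i u + ⟪g i u, v - u⟫ ≤ f i v)
    (hsm : ∀ i (u v : EuclideanSpace ℝ (Fin n)),
      f i v ≤ f i u + ⟪g i u, v - u⟫ + L / 2 * ‖v - u‖ ^ 2)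
    (y : Fin m → EuclideanSpace ℝ (Fin n))
    (ybar : EuclideanSpace ℝ (Fin n)) (hybar : ybar = (m : ℝ)⁻¹ • ∑ i, y i)
    (sbar : EuclideanSpace ℝ (Fin n)) (hsbar : sbar = (m : ℝ)⁻¹ • ∑ i, g i (y i))
    (w : EuclideanSpace ℝ (Fin n)) :
    (m : ℝ)⁻¹ * ∑ i, f i w ≤
      (m : ℝ)⁻¹ * ∑ i, (f i (y i) + ⟪g i (y i), ybar - y i⟫) +
        ⟪sbar, w - ybar⟫ + L / 2 * ‖w - ybar‖ ^ 2 +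
        L / (2 * m) * ∑ i, ‖y i - ybar‖ ^ 2 := by
  have hm' : (m : ℝ) ≠ 0 := Nat.cast_ne_zero.mpr hm.ne'
  have hzero : ∑ i, (ybar - y i) = 0 := by
    rw [Finset.sum_sub_distrib, Finset.sum_const, Finset.card_univ, Fintype.card_fin,
      hybar]
    rw [← Nat.cast_smul_eq_nsmul ℝ, smul_smul, mul_inv_cancel₀ hm', one_smul, sub_self]
  have hcross : ∑ i, ⟪w - ybar, ybar - y i⟫ = 0 := by
    rw [← inner_sum, hzero, inner_zero_right]
  have hinner : ∑ i, ⟪g i (y i), w - ybar⟫ = (m : ℝ) * ⟪sbar, w - ybar⟫ := by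
    rw [hsbar, real_inner_smul_left, ← sum_inner, ← mul_assoc,
      mul_inv_cancel₀ hm', one_mul]
  have key : ∀ i : Fin m, f i w ≤ f i (y i) + ⟪g i (y i), ybar - y i⟫
      + ⟪g i (y i), w - ybar⟫ + L * ⟪w - ybar, ybar - y i⟫
      + L / 2 * ‖w - ybar‖ ^ 2 + L / 2 * ‖y i - ybar‖ ^ 2 := by
    intro i
    have h1 := hsm i (y i) w
    have h2 : w - y i = (w - ybar) + (ybar - y i) := by abel
    have h3 : ‖w - y i‖ ^ 2
        = ‖w - ybar‖ ^ 2 + 2 * ⟪w - ybar, ybar - y i⟫ + ‖ybar - y i‖ ^ 2 := by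
      rw [h2, @norm_add_sq_real]
    have h4 : ⟪g i (y i), w - y i⟫ = ⟪g i (y i), w - ybar⟫ + ⟪g i (y i), ybar - y i⟫ := by
      rw [h2, inner_add_right]
    have h5 : ‖ybar - y i‖ = ‖y i - ybar‖ := norm_sub_rev _ _
    calc f i w ≤ _ := h1
    _ = _ := by rw [h3, h4, h5]; ring
  have hsum := Finset.sum_le_sum (fun i (_ : i ∈ Finset.univ) => key i)
  have hrhs : ∑ i, (f i (y i) + ⟪g i (y i), ybar - y i⟫
      + ⟪g i (y i), w - ybar⟫ + L * ⟪w - ybar, ybar - y i⟫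
      + L / 2 * ‖w - ybar‖ ^ 2 + L / 2 * ‖y i - ybar‖ ^ 2)
      = (∑ i, (f i (y i) + ⟪g i (y i), ybar - y i⟫))
        + (m : ℝ) * ⟪sbar, w - ybar⟫ + (m : ℝ) * (L / 2 * ‖w - ybar‖ ^ 2)
        + L / 2 * ∑ i, ‖y i - ybar‖ ^ 2 := by
    simp only [Finset.sum_add_distrib, hinner]
    rw [← Finset.mul_sum, hcross, Finset.sum_const, Finset.card_univ, Fintype.card_fin,
      nsmul_eq_mul, ← Finset.mul_sum]
    ring
  rw [hrhs] at hsum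
  have := mul_le_mul_of_nonneg_left hsum (by positivity : (0:ℝ) ≤ (m : ℝ)⁻¹)
  calc (m : ℝ)⁻¹ * ∑ i, f i w ≤ _ := this
  _ = _ := by field_simp
end

section
/- Let f₁,...,f_m be L-smooth convex functions on ℝⁿ. Given points y¹₁,...,y¹_m and y²₁,...,y²_m with averages ȳ¹, ȳ² and a reference point x̄ ∈ ℝⁿ, and any τ > 0, Σᵢ ‖∇fᵢ(y²ᵢ) − ∇fᵢ(y¹ᵢ)‖² ≤ 2mL(1+τ) D_f(x̄, y²) + 2L²(1 + 1/τ) [ m‖x̄ − ȳ¹‖² + Σᵢ ‖ȳ¹ − y¹ᵢ‖² ], where D_f(x̄, y²) = (1/m)Σᵢ [fᵢ(x̄) − fᵢ(y²ᵢ) − ⟨∇fᵢ(y²ᵢ), x̄ − y²ᵢ⟩]. -/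
open scoped RealInnerProductSpace BigOperators

section Aux

variable {E : Type*} [NormedAddCommGroup E] [InnerProductSpace ℝ E] [CompleteSpace E]

private lemma line_hasDerivAt {f : E → ℝ} {g : E → E}
    (hgrad : ∀ x, HasGradientAt f (g x) x) (x v : E) (t : ℝ) :
    HasDerivAt (fun s : ℝ => f (x + s • v)) ⟪g (x + t • v), v⟫ t := by
  have hline : HasDerivAt (fun s : ℝ => x + s • v) v t := by
    simpa using ((hasDerivAt_id t).smul_const v).const_add x
  have := (hgrad (x + t • v)).hasFDerivAt.comp_hasDerivAt t hline
  simpa [InnerProductSpace.toDual_apply_apply, Function.comp_def] using this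

/-- Gradient inequality for convex functions. -/
private lemma convex_grad_ineq {f : E → ℝ} {g : E → E}
    (hgrad : ∀ x, HasGradientAt f (g x) x)
    (hconv : ConvexOn ℝ Set.univ f) (x y : E) :
    f x + ⟪g x, y - x⟫ ≤ f y := by
  set φ : ℝ → ℝ := fun s => f (x + s • (y - x)) with hφ
  have hd : HasDerivAt φ ⟪g x, y - x⟫ 0 := by
    have := line_hasDerivAt hgrad x (y - x) 0
    simpa using this
  have htend : Filter.Tendsto (slope φ 0) (nhdsWithin 0 (Set.Ioi 0))
      (nhds ⟪g x, y - x⟫) :=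
    (hasDerivAt_iff_tendsto_slope.1 hd).mono_left
      (nhdsWithin_mono _ (fun t ht => by
        simp only [Set.mem_compl_iff, Set.mem_singleton_iff]
        exact ne_of_gt ht))
  have hbound : ∀ᶠ t in nhdsWithin (0:ℝ) (Set.Ioi 0), slope φ 0 t ≤ f y - f x := by
    filter_upwards [Ioc_mem_nhdsGT_of_mem (by norm_num : (0:ℝ) ∈ Set.Ico (0:ℝ) 1)]
      with t ht
    have ht0 : 0 < t := ht.1
    have ht1 : t ≤ 1 := ht.2
    have hcv := hconv.2 (Set.mem_univ x) (Set.mem_univ y)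
      (by linarith : (0:ℝ) ≤ 1 - t) (le_of_lt ht0) (by ring)
    have hpt : x + t • (y - x) = (1 - t) • x + t • y := by
      simp [smul_sub, sub_smul, one_smul]; abel
    have : φ t ≤ (1 - t) * f x + t * f y := by
      rw [hφ]; simp only [hpt]; simpa using hcv
    have hφ0 : φ 0 = f x := by simp [hφ]
    rw [slope_def_field, sub_zero, div_le_iff₀ ht0]
    linarith [this, hφ0]
  have hfin := le_of_tendsto htend hbound
  linarith

/-- Descent lemma for functions with L-Lipschitz gradient. -/
private lemma descent_lemma {f : E → ℝ} {g : E → E} {L : ℝ} (hL : 0 < L)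
    (hgrad : ∀ x, HasGradientAt f (g x) x)
    (hlip : ∀ u v : E, ‖g v - g u‖ ≤ L * ‖v - u‖) (x y : E) :
    f y ≤ f x + ⟪g x, y - x⟫ + L / 2 * ‖y - x‖ ^ 2 := by
  set v := y - x with hv
  set ψ : ℝ → ℝ := fun t => L * t ^ 2 * ‖v‖ ^ 2 / 2 -
      (f (x + t • v) - f x - t * ⟪g x, v⟫) with hψ
  have hder : ∀ t : ℝ, HasDerivAt ψ
      (L * t * ‖v‖ ^ 2 - (⟪g (x + t • v), v⟫ - ⟪g x, v⟫)) t := by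
    intro t
    have h1 : HasDerivAt (fun s : ℝ => L * s ^ 2 * ‖v‖ ^ 2 / 2)
        (L * t * ‖v‖ ^ 2) t := by
      have := (hasDerivAt_pow 2 t).const_mul L
      have h2 := (this.mul_const (‖v‖ ^ 2)).div_const 2
      exact h2.congr_deriv (by norm_num; ring)
    have h3 : HasDerivAt (fun s : ℝ => f (x + s • v) - f x - s * ⟪g x, v⟫)
        (⟪g (x + t • v), v⟫ - ⟪g x, v⟫) t := by
      have h4 := (line_hasDerivAt hgrad x v t).sub_const (f x)
      have h5 : HasDerivAt (fun s : ℝ => s * ⟪g x, v⟫) ⟪g x, v⟫ t := by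
        simpa using (hasDerivAt_id t).mul_const (⟪g x, v⟫)
      exact h4.sub h5
    exact h1.sub h3
  have hmono : MonotoneOn ψ (Set.Ici (0:ℝ)) := by
    apply monotoneOn_of_deriv_nonneg (convex_Ici 0)
    · exact fun t _ => (hder t).continuousAt.continuousWithinAt
    · intro t _
      exact ((hder t).differentiableAt).differentiableWithinAt
    · intro t ht
      rw [interior_Ici] at ht
      rw [(hder t).deriv]
      have hip : ⟪g (x + t • v) - g x, v⟫ ≤ L * t * ‖v‖ ^ 2 := by
        calc ⟪g (x + t • v) - g x, v⟫ ≤ ‖g (x + t • v) - g x‖ * ‖v‖ :=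
              real_inner_le_norm _ _
          _ ≤ (L * ‖(x + t • v) - x‖) * ‖v‖ := by
              gcongr; exact hlip x (x + t • v)
          _ = L * t * ‖v‖ ^ 2 := by
              simp [norm_smul, abs_of_pos (Set.mem_Ioi.1 ht)]; ring
      rw [inner_sub_left] at hip
      linarith
  have h01 := hmono (Set.mem_Ici.2 (le_refl (0:ℝ))) (Set.mem_Ici.2 zero_le_one)
    zero_le_one
  have hψ0 : ψ 0 = 0 := by simp [hψ]
  have hψ1 : ψ 1 = L * ‖v‖ ^ 2 / 2 - (f y - f x - ⟪g x, v⟫) := by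
    simp [hψ, hv]
  rw [hψ0, hψ1] at h01
  have : ⟪g x, y - x⟫ = ⟪g x, v⟫ := by rw [hv]
  rw [this]; linarith

/-- Cocoercivity. -/
private lemma cocoercivity {f : E → ℝ} {g : E → E} {L : ℝ} (hL : 0 < L)
    (hgrad : ∀ x, HasGradientAt f (g x) x)
    (hconv : ConvexOn ℝ Set.univ f)
    (hlip : ∀ u v : E, ‖g v - g u‖ ≤ L * ‖v - u‖) (x y : E) :
    ‖g x - g y‖ ^ 2 ≤ 2 * L * (f x - f y - ⟪g y, x - y⟫) := by
  set d := g x - g y with hd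
  set z := x - L⁻¹ • d with hz
  have h1 : f y + ⟪g y, z - y⟫ ≤ f z := convex_grad_ineq hgrad hconv y z
  have h2 : f z ≤ f x + ⟪g x, z - x⟫ + L / 2 * ‖z - x‖ ^ 2 :=
    descent_lemma hL hgrad hlip x z
  have hzx : z - x = -(L⁻¹ • d) := by rw [hz]; abel
  have hzy : z - y = (x - y) - L⁻¹ • d := by rw [hz]; abel
  have e1 : ⟪g x, z - x⟫ = -(L⁻¹ * ⟪g x, d⟫) := by
    rw [hzx, inner_neg_right, real_inner_smul_right]
  have e2 : ⟪g y, z - y⟫ = ⟪g y, x - y⟫ - L⁻¹ * ⟪g y, d⟫ := by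
    rw [hzy, inner_sub_right, real_inner_smul_right]
  have e3 : ‖z - x‖ ^ 2 = L⁻¹ ^ 2 * ‖d‖ ^ 2 := by
    rw [hzx, norm_neg, norm_smul]
    rw [Real.norm_eq_abs, abs_of_pos (inv_pos.2 hL)]
    ring
  have e4 : ⟪g x, d⟫ - ⟪g y, d⟫ = ‖d‖ ^ 2 := by
    rw [← inner_sub_left, ← hd, real_inner_self_eq_norm_sq]
  have hL' : L ≠ 0 := ne_of_gt hL
  rw [e1] at h2
  rw [e2] at h1
  rw [e3] at h2
  have e5 : L⁻¹ * ⟪g x, d⟫ - L⁻¹ * ⟪g y, d⟫ = L⁻¹ * ‖d‖ ^ 2 := by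
    rw [← mul_sub, e4]
  have key : L⁻¹ * ‖d‖ ^ 2 - L / 2 * (L⁻¹ ^ 2 * ‖d‖ ^ 2) ≤
      f x - f y - ⟪g y, x - y⟫ := by linarith [h1, h2, e5]
  have : L⁻¹ * ‖d‖ ^ 2 - L / 2 * (L⁻¹ ^ 2 * ‖d‖ ^ 2) = ‖d‖ ^ 2 / (2 * L) := by
    field_simp; ring
  rw [this] at key
  calc ‖d‖ ^ 2 = 2 * L * (‖d‖ ^ 2 / (2 * L)) := by field_simp
    _ ≤ 2 * L * (f x - f y - ⟪g y, x - y⟫) := by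
        apply mul_le_mul_of_nonneg_left key; positivity

private lemma young_norm {a b : E} {τ : ℝ} (hτ : 0 < τ) :
    ‖a + b‖ ^ 2 ≤ (1 + τ) * ‖a‖ ^ 2 + (1 + 1 / τ) * ‖b‖ ^ 2 := by
  have h1 : ‖a + b‖ ^ 2 = ‖a‖ ^ 2 + 2 * ⟪a, b⟫ + ‖b‖ ^ 2 :=
    norm_add_sq_real a b
  have h2 : ⟪a, b⟫ ≤ ‖a‖ * ‖b‖ := real_inner_le_norm a b
  have h3 : 2 * (‖a‖ * ‖b‖) ≤ τ * ‖a‖ ^ 2 + (1 / τ) * ‖b‖ ^ 2 := by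
    have := sq_nonneg (Real.sqrt τ * ‖a‖ - Real.sqrt (1/τ) * ‖b‖)
    have hs : Real.sqrt τ * Real.sqrt (1/τ) = 1 := by
      rw [← Real.sqrt_mul (le_of_lt hτ)]
      rw [mul_one_div_cancel (ne_of_gt hτ), Real.sqrt_one]
    nlinarith [Real.sq_sqrt (le_of_lt hτ), Real.sq_sqrt (le_of_lt (by positivity : (0:ℝ) < 1/τ)),
      norm_nonneg a, norm_nonneg b]
  nlinarith

end Aux

/-- Gradient-difference bound via Bregman distance and consensus errors
(inequality (25) in the paper). -/
theorem stmt_10 (n m : ℕ) (hm : 0 < m) (L τ : ℝ) (hL : 0 < L) (hτ : 0 < τ)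
    (f : Fin m → EuclideanSpace ℝ (Fin n) → ℝ)
    (g : Fin m → EuclideanSpace ℝ (Fin n) → EuclideanSpace ℝ (Fin n))
    (hgrad : ∀ i x, HasGradientAt (f i) (g i x) x)
    (hconv : ∀ i, ConvexOn ℝ Set.univ (f i))
    (hlip : ∀ i (u v : EuclideanSpace ℝ (Fin n)), ‖g i v - g i u‖ ≤ L * ‖v - u‖)
    (y1 y2 : Fin m → EuclideanSpace ℝ (Fin n))
    (xbar : EuclideanSpace ℝ (Fin n))
    (ybar1 : EuclideanSpace ℝ (Fin n)) (hybar1 : ybar1 = (m : ℝ)⁻¹ • ∑ i, y1 i)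
    (Df : ℝ)
    (hDf : Df = (m : ℝ)⁻¹ *
      ∑ i, (f i xbar - f i (y2 i) - ⟪g i (y2 i), xbar - y2 i⟫)) :
    ∑ i, ‖g i (y2 i) - g i (y1 i)‖ ^ 2 ≤
      2 * m * L * (1 + τ) * Df +
      2 * L ^ 2 * (1 + 1 / τ) *
        (m * ‖xbar - ybar1‖ ^ 2 + ∑ i, ‖ybar1 - y1 i‖ ^ 2) := by
  have hm' : (0:ℝ) < (m:ℝ) := by exact_mod_cast hm
  -- per-index bound
  have key : ∀ i, ‖g i (y2 i) - g i (y1 i)‖ ^ 2 ≤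
      (1 + τ) * (2 * L * (f i xbar - f i (y2 i) - ⟪g i (y2 i), xbar - y2 i⟫)) +
      (1 + 1 / τ) * (2 * L ^ 2 * (‖xbar - ybar1‖ ^ 2 + ‖ybar1 - y1 i‖ ^ 2)) := by
    intro i
    have hsplit : g i (y2 i) - g i (y1 i) =
        (g i (y2 i) - g i xbar) + (g i xbar - g i (y1 i)) := by abel
    have hy := young_norm (a := g i (y2 i) - g i xbar)
      (b := g i xbar - g i (y1 i)) hτ
    rw [hsplit]
    refine hy.trans ?_
    have ha : ‖g i (y2 i) - g i xbar‖ ^ 2 ≤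
        2 * L * (f i xbar - f i (y2 i) - ⟪g i (y2 i), xbar - y2 i⟫) := by
      have := cocoercivity hL (hgrad i) (hconv i) (hlip i) xbar (y2 i)
      have hsym : ‖g i xbar - g i (y2 i)‖ = ‖g i (y2 i) - g i xbar‖ :=
        norm_sub_rev _ _
      rw [hsym] at this; exact this
    have hb : ‖g i xbar - g i (y1 i)‖ ^ 2 ≤
        2 * L ^ 2 * (‖xbar - ybar1‖ ^ 2 + ‖ybar1 - y1 i‖ ^ 2) := by
      have h1 : ‖g i xbar - g i (y1 i)‖ ≤ L * ‖xbar - y1 i‖ := by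
        have := hlip i (y1 i) xbar
        rwa [show xbar - y1 i = xbar - y1 i from rfl] at this
      have h2 : ‖xbar - y1 i‖ ≤ ‖xbar - ybar1‖ + ‖ybar1 - y1 i‖ := by
        have : xbar - y1 i = (xbar - ybar1) + (ybar1 - y1 i) := by abel
        rw [this]; exact norm_add_le _ _
      have h3 : ‖g i xbar - g i (y1 i)‖ ^ 2 ≤ L ^ 2 * ‖xbar - y1 i‖ ^ 2 := by
        have := mul_self_le_mul_self (norm_nonneg _) h1
        nlinarith [norm_nonneg (xbar - y1 i)]
      have h4 : ‖xbar - y1 i‖ ^ 2 ≤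
          2 * (‖xbar - ybar1‖ ^ 2 + ‖ybar1 - y1 i‖ ^ 2) := by
        nlinarith [norm_nonneg (xbar - ybar1), norm_nonneg (ybar1 - y1 i),
          norm_nonneg (xbar - y1 i), sq_nonneg (‖xbar - ybar1‖ - ‖ybar1 - y1 i‖)]
      have h5 := mul_le_mul_of_nonneg_left h4 (sq_nonneg L)
      nlinarith [h3, h5]
    have hτ1 : (0:ℝ) ≤ 1 + τ := by linarith
    have hτ2 : (0:ℝ) ≤ 1 + 1 / τ := by positivity
    gcongr
  calc ∑ i, ‖g i (y2 i) - g i (y1 i)‖ ^ 2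
      ≤ ∑ i, ((1 + τ) * (2 * L * (f i xbar - f i (y2 i) - ⟪g i (y2 i), xbar - y2 i⟫)) +
        (1 + 1 / τ) * (2 * L ^ 2 * (‖xbar - ybar1‖ ^ 2 + ‖ybar1 - y1 i‖ ^ 2))) :=
        Finset.sum_le_sum fun i _ => key i
    _ = 2 * m * L * (1 + τ) * Df +
        2 * L ^ 2 * (1 + 1 / τ) *
          (m * ‖xbar - ybar1‖ ^ 2 + ∑ i, ‖ybar1 - y1 i‖ ^ 2) := by
        rw [Finset.sum_add_distrib, hDf]
        rw [← Finset.mul_sum, ← Finset.mul_sum]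
        have hsum : ∑ i, (1 + 1 / τ) * (2 * L ^ 2 * (‖xbar - ybar1‖ ^ 2 + ‖ybar1 - y1 i‖ ^ 2)) =
            (1 + 1 / τ) * (2 * L ^ 2 * ((m : ℝ) * ‖xbar - ybar1‖ ^ 2 + ∑ i, ‖ybar1 - y1 i‖ ^ 2)) := by
          rw [← Finset.mul_sum, ← Finset.mul_sum, Finset.sum_add_distrib, Finset.sum_const,
            Finset.card_univ, Fintype.card_fin, nsmul_eq_mul]
        rw [hsum]
        field_simp
end
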